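/- Let (B_n)_{n≥0} be a sequence of positive integers satisfying B_{n+1} ≥ B_n(B_n + 1) for all n ≥ 0. Then the sum of the alternating series α = Σ_{n=0}^∞ (−1)^n / B_n is irrational. -/

import Mathlib

/-- If `B_{n+1} ≥ B_n (B_n + 1)` for all `n`, then `∑ (-1)^n / B_n` is irrational. -/
theorem stmt_2 (B : ℕ → ℕ) (hBpos : ∀ n : ℕ, 0 < B n)
    (hB : ∀ n : ℕ, B n * (B n + 1) ≤ B (n + 1)) :
    Irrational (∑' n : ℕ, (-1 : ℝ) ^ n / (B n : ℝ)) := by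
  have hBR : ∀ n, (0:ℝ) < (B n : ℝ) := fun n => by exact_mod_cast hBpos n
  have hB1 : ∀ n, (1:ℝ) ≤ (B n : ℝ) := fun n => by exact_mod_cast hBpos n
  have hBcast : ∀ n, (B n : ℝ) * ((B n : ℝ) + 1) ≤ (B (n+1) : ℝ) := fun n => by
    exact_mod_cast hB n
  -- growth : B (M+k) ≥ B M * 2^k
  have hgrow : ∀ M k, B M * 2 ^ k ≤ B (M + k) := by
    intro M k
    induction k with
    | zero => simp
    | succ k ih =>
      have h1 : B (M + k) * 2 ≤ B (M + k) * (B (M + k) + 1) :=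
        Nat.mul_le_mul_left _ (by have := hBpos (M + k); omega)
      calc B M * 2 ^ (k+1) = B M * 2 ^ k * 2 := by ring
        _ ≤ B (M + k) * 2 := Nat.mul_le_mul_right 2 ih
        _ ≤ B (M + k) * (B (M + k) + 1) := h1
        _ ≤ B (M + k + 1) := hB (M + k)
  have hbound : ∀ M k, (1:ℝ) / (B (M + k) : ℝ) ≤ (1 / (B M : ℝ)) * (1/2) ^ k := by
    intro M k
    have h1 : (B M : ℝ) * 2 ^ k ≤ (B (M + k) : ℝ) := by exact_mod_cast hgrow M k
    have h2 : (0:ℝ) < (B M : ℝ) * 2 ^ k := mul_pos (hBR M) (by positivity)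
    have := one_div_le_one_div_of_le h2 h1
    calc (1:ℝ) / (B (M + k) : ℝ) ≤ 1 / ((B M : ℝ) * 2 ^ k) := this
      _ = (1 / (B M : ℝ)) * (1/2) ^ k := by
          rw [div_pow, one_pow, div_mul_div_comm, one_mul]
  have hgeo : Summable (fun k : ℕ => ((1:ℝ)/2) ^ k) :=
    summable_geometric_of_lt_one (by norm_num) (by norm_num)
  have hsumnorm : ∀ M, Summable (fun k : ℕ => (1:ℝ) / (B (M + k) : ℝ)) := by
    intro M
    apply Summable.of_nonneg_of_le (fun k => by positivity) (hbound M)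
    exact hgeo.mul_left _
  have hsum : ∀ M, Summable (fun k : ℕ => (-1:ℝ)^k / (B (M + k) : ℝ)) := by
    intro M
    apply Summable.of_norm_bounded (hsumnorm M)
    intro k
    rw [norm_div, norm_pow, norm_neg, norm_one, one_pow]
    simp
  set T : ℕ → ℝ := fun M => ∑' k : ℕ, (-1:ℝ)^k / (B (M + k) : ℝ) with hTdef
  -- tail bound
  have htail : ∀ M, |T M| ≤ 2 / (B M : ℝ) := by
    intro M
    have h2 : (fun k : ℕ => ‖(-1:ℝ)^k / (B (M + k) : ℝ)‖)
        = fun k : ℕ => (1:ℝ) / (B (M + k) : ℝ) := by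
      funext k
      rw [norm_div, norm_pow, norm_neg, norm_one, one_pow]
      simp
    have h1 : ‖T M‖ ≤ ∑' k : ℕ, ‖(-1:ℝ)^k / (B (M + k) : ℝ)‖ :=
      norm_tsum_le_tsum_norm (h2 ▸ hsumnorm M)
    rw [h2] at h1
    have h3 : ∑' k : ℕ, (1:ℝ) / (B (M + k) : ℝ)
        ≤ ∑' k : ℕ, (1 / (B M : ℝ)) * (1/2) ^ k :=
      Summable.tsum_le_tsum (hbound M) (hsumnorm M) (hgeo.mul_left _)
    have h4 : ∑' k : ℕ, (1 / (B M : ℝ)) * (1/2) ^ k = 2 / (B M : ℝ) := by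
      rw [tsum_mul_left, tsum_geometric_of_lt_one (by norm_num) (by norm_num)]
      norm_num
      ring
    calc |T M| = ‖T M‖ := rfl
      _ ≤ ∑' k : ℕ, (1:ℝ) / (B (M + k) : ℝ) := h1
      _ ≤ 2 / (B M : ℝ) := by rw [← h4]; exact h3
  -- recurrence
  have hrec : ∀ M, T M = 1 / (B M : ℝ) - T (M + 1) := by
    intro M
    have h0 := Summable.tsum_eq_zero_add (hsum M)
    have h1 : (fun k : ℕ => (-1:ℝ)^(k+1) / (B (M + (k+1)) : ℝ))
        = fun k : ℕ => -((-1:ℝ)^k / (B ((M+1) + k) : ℝ)) := by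
      funext k
      rw [show M + (k+1) = (M+1) + k from by omega, pow_succ]
      ring
    rw [h1, tsum_neg] at h0
    simp only [hTdef]
    rw [h0]
    simp
    ring
  -- nonnegativity
  have hTnonneg : ∀ M, 0 ≤ T M := by
    intro M
    rw [hrec M]
    have h1 : T (M+1) ≤ 2 / (B (M+1) : ℝ) := le_trans (le_abs_self _) (htail (M+1))
    have h2 : 2 * (B M : ℝ) ≤ (B (M+1) : ℝ) := by nlinarith [hBcast M, hB1 M]
    have h3 : 2 / (B (M+1) : ℝ) ≤ 1 / (B M : ℝ) := by
      rw [div_le_div_iff₀ (by linarith [hBR (M+1)]) (hBR M)]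
      linarith
    linarith
  -- strict positivity
  have hTpos : ∀ N, 0 < T N := by
    intro N
    have h1 : (B N : ℝ) < (B (N+1) : ℝ) := by nlinarith [hBcast N, hB1 N]
    have h2 : 1 / (B (N+1) : ℝ) < 1 / (B N : ℝ) :=
      one_div_lt_one_div_of_lt (hBR N) h1
    have := hTnonneg (N+2)
    rw [hrec N, hrec (N+1)]
    linarith
  have hTlt : ∀ N, T N < 1 / (B N : ℝ) := by
    intro N
    rw [hrec N]
    linarith [hTpos (N+1)]
  -- suppose rational
  rintro ⟨r, hr⟩
  have hT0 : T 0 = (r : ℝ) := by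
    have h1 : (fun k : ℕ => (-1:ℝ)^k / (B (0 + k) : ℝ))
        = fun k : ℕ => (-1:ℝ)^k / (B k : ℝ) := by
      funext k; rw [Nat.zero_add]
    simp only [hTdef, h1]
    exact hr.symm
  set Pn : ℕ → ℕ := fun N => ∏ i ∈ Finset.range N, B i with hPdef
  have hPpos : ∀ N, (0:ℝ) < (Pn N : ℝ) := by
    intro N
    have : 0 < Pn N := Finset.prod_pos (fun i _ => hBpos i)
    exact_mod_cast this
  have hPsucc : ∀ N, (Pn (N+1) : ℝ) = (Pn N : ℝ) * (B N : ℝ) := by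
    intro N
    have : Pn (N+1) = Pn N * B N := Finset.prod_range_succ B N
    exact_mod_cast this
  have hDpos : (0:ℝ) < (r.den : ℝ) := by
    have := r.pos; exact_mod_cast this
  -- integrality
  have key : ∀ N, ∃ m : ℤ, (m : ℝ) = (r.den : ℝ) * (Pn N : ℝ) * T N := by
    intro N
    induction N with
    | zero =>
      refine ⟨r.num, ?_⟩
      have h1 : Pn 0 = 1 := Finset.prod_range_zero B
      rw [h1, hT0]
      have h2 : (r : ℝ) = (r.num : ℝ) / (r.den : ℝ) := by
        rw [Rat.cast_def]
      rw [h2]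
      field_simp
      simp
    | succ N ih =>
      obtain ⟨m, hm⟩ := ih
      refine ⟨(r.den : ℤ) * (Pn N : ℤ) - (B N : ℤ) * m, ?_⟩
      have hTrec : T (N+1) = 1 / (B N : ℝ) - T N := by rw [hrec N]; ring
      push_cast
      rw [hm, hPsucc, hTrec]
      have hBne : (B N : ℝ) ≠ 0 := ne_of_gt (hBR N)
      field_simp
  choose m hm using key
  -- positivity of m
  have hm1 : ∀ N, 1 ≤ m N := by
    intro N
    have h1 : (0:ℝ) < (m N : ℝ) := by
      rw [hm N]
      exact mul_pos (mul_pos hDpos (hPpos N)) (hTpos N)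
    have : (0:ℤ) < m N := by exact_mod_cast h1
    omega
  -- strict decrease
  have hdec : ∀ N, m (N+1) < m N := by
    intro N
    have ha := hBR N
    have hb := hBR (N+1)
    set a : ℝ := (B N : ℝ)
    set b : ℝ := (B (N+1) : ℝ)
    set t : ℝ := T (N+1)
    have h1 : t < 1 / b := hTlt (N+1)
    have h2 : a * (a + 1) ≤ b := hBcast N
    have ht0 : 0 ≤ t := hTnonneg (N+1)
    have hbt : t * b < 1 := (lt_div_iff₀ hb).mp h1
    have h3 : (t + a * t) * a < 1 := by nlinarith
    have h4 : t + a * t < 1 / a := (lt_div_iff₀ ha).mpr h3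
    have h5 : a * t < T N := by rw [hrec N]; linarith
    have h6 : (m (N+1) : ℝ) < (m N : ℝ) := by
      rw [hm (N+1), hm N, hPsucc]
      calc (r.den : ℝ) * ((Pn N : ℝ) * a) * t
          = (r.den : ℝ) * (Pn N : ℝ) * (a * t) := by ring
        _ < (r.den : ℝ) * (Pn N : ℝ) * T N :=
            mul_lt_mul_of_pos_left h5 (mul_pos hDpos (hPpos N))
    exact_mod_cast h6
  -- infinite descent
  have hle : ∀ N : ℕ, m N ≤ m 0 - N := by
    intro N
    induction N with
    | zero => simp
    | succ N ih =>
      have := hdec N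
      push_cast
      push_cast at ih
      omega
  have h1 := hle (m 0).toNat
  have h2 := hm1 (m 0).toNat
  have h3 : ((m 0).toNat : ℤ) = m 0 := Int.toNat_of_nonneg (by linarith [hm1 0])
  omega
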